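/- For every integer N ≥ 1, the identity P_{3N} · (1 − q^{3N}) = P_{3N−1} − P_{3N−3} · q^{3N} holds in the formal power series ring ℤ[[x, y, q]]. -/

import Mathlib

/-- The `i`-th largest part (0-indexed) of the weakly decreasing list of parts of a
partition of `n` (entries beyond the number of parts are `0`, which realizes the
padding by zeros). -/
def nthPart {n : ℕ} (P : n.Partition) (i : ℕ) : ℕ :=
  ((P.parts.sort (· ≤ ·)).reverse).getD i 0

/-- The `j`-th component (`1 ≤ j ≤ m - 1`) of the alternating sum type modulo `m` of a
partition of `n`: `Σ_j = ∑_i (λ_{(i-1)m+j} - λ_{(i-1)m+j+1})` (1-indexed parts, padded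
by zeros; summing over `i < n + 1` covers every nonzero term). -/
def altSumType (m : ℕ) {n : ℕ} (P : n.Partition) (j : ℕ) : ℕ :=
  ∑ i ∈ Finset.range (n + 1), (nthPart P (i * m + (j - 1)) - nthPart P (i * m + j))

/-- `aN N s1 s2 n` : the number of partitions of `n` with exactly `N` (positive) parts,
every part occurring at most twice, and alternating sum type modulo `3` equal to
`(s1, s2)`. -/
noncomputable def aN (N s1 s2 n : ℕ) : ℕ :=
  Nat.card {P : n.Partition // P.parts.card = N ∧ (∀ p, P.parts.count p ≤ 2) ∧
    altSumType 3 P 1 = s1 ∧ altSumType 3 P 2 = s2}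

/-- The formal power series `A_N ∈ ℤ[[x, y, q]]` (variables `x = X 0`, `y = X 1`,
`q = X 2`): `A_0 = 1` and, for `N ≥ 1`,
`A_N = ∑_{Σ₁, Σ₂ ≥ 0, n ≥ 1} a_N(Σ₁, Σ₂; n) x^{Σ₁} y^{Σ₂} q^n`. -/
noncomputable def Aser (N : ℕ) : MvPowerSeries (Fin 3) ℤ :=
  if N = 0 then 1
  else fun e => if 1 ≤ e 2 then (aN N (e 0) (e 1) (e 2) : ℤ) else 0

/-- The variable `x`. -/
noncomputable def Xv : MvPowerSeries (Fin 3) ℤ := MvPowerSeries.X 0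

/-- The variable `y`. -/
noncomputable def Yv : MvPowerSeries (Fin 3) ℤ := MvPowerSeries.X 1

/-- The variable `q`. -/
noncomputable def Qv : MvPowerSeries (Fin 3) ℤ := MvPowerSeries.X 2

/-- The formal power series `P_N = ∑_{i=0}^{N} A_i ∈ ℤ[[x, y, q]]`. -/
noncomputable def Pser (N : ℕ) : MvPowerSeries (Fin 3) ℤ :=
  ∑ i ∈ Finset.range (N + 1), Aser i


/-! ### Auxiliary list and multiset lemmas -/

def dl {n : ℕ} (P : n.Partition) : List ℕ := (P.parts.sort (· ≤ ·)).reverse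

lemma dl_coe {n : ℕ} (P : n.Partition) : (dl P : Multiset ℕ) = P.parts := by
  simp [dl, Multiset.sort_eq]

lemma dl_sorted {n : ℕ} (P : n.Partition) : (dl P).Pairwise (· ≥ ·) := by
  rw [dl, List.pairwise_reverse]
  exact (Multiset.pairwise_sort (s := P.parts) (r := (· ≤ ·))).imp (fun h => h)

lemma nthPart_eq {n : ℕ} (P : n.Partition) (i : ℕ) : nthPart P i = (dl P).getD i 0 := rfl

lemma dl_length {n : ℕ} (P : n.Partition) : (dl P).length = Multiset.card P.parts := by
  rw [← dl_coe P]; rfl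

lemma nthPart_pos {n : ℕ} (P : n.Partition) {i : ℕ} (h : i < Multiset.card P.parts) :
    1 ≤ nthPart P i := by
  have hl : i < (dl P).length := by rwa [dl_length]
  rw [nthPart_eq, List.getD_eq_getElem _ _ hl]
  have : (dl P)[i] ∈ (dl P : Multiset ℕ) := by
    exact_mod_cast List.getElem_mem _
  rw [dl_coe] at this
  exact P.parts_pos this

lemma nthPart_eq_zero {n : ℕ} (P : n.Partition) {i : ℕ} (h : Multiset.card P.parts ≤ i) :
    nthPart P i = 0 := by
  rw [nthPart_eq, List.getD_eq_default]
  rwa [dl_length]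

lemma getD_zero_of_all_zero {l : List ℕ} (h : ∀ x ∈ l, x = 0) (i : ℕ) : l.getD i 0 = 0 := by
  rcases lt_or_ge i l.length with hi | hi
  · rw [List.getD_eq_getElem _ _ hi]; exact h _ (List.getElem_mem hi)
  · exact List.getD_eq_default _ _ hi

lemma getD_filter_sorted : ∀ (l : List ℕ), l.Pairwise (· ≥ ·) → ∀ i,
    (l.filter (fun x => x ≠ 0)).getD i 0 = l.getD i 0 := by
  intro l
  induction l with
  | nil => intro _ i; rfl
  | cons a l ih =>
    intro hs i
    rcases List.pairwise_cons.1 hs with ⟨ha, hl⟩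
    by_cases h0 : a = 0
    · have hall : ∀ x ∈ a :: l, x = 0 := by
        intro x hx
        rcases List.mem_cons.1 hx with rfl | hx
        · exact h0
        · have := ha x hx; omega
      have : (a :: l).filter (fun x => x ≠ 0) = [] := by
        rw [List.filter_eq_nil_iff]
        intro x hx; simpa using hall x hx
      rw [this, getD_zero_of_all_zero hall]
      rfl
    · rw [List.filter_cons_of_pos (by simpa using h0)]
      cases i with
      | zero => rfl
      | succ i => simpa using ih hl i

def shrink' (s : Multiset ℕ) : Multiset ℕ := (s.map (· - 1)).filter (fun x => x ≠ 0)

lemma nth_shrink {n n' : ℕ} (P : n.Partition) (Q : n'.Partition)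
    (hQ : Q.parts = shrink' P.parts) (i : ℕ) : nthPart Q i = nthPart P i - 1 := by
  have hMs : ((dl P).map (· - 1)).Pairwise (· ≥ ·) :=
    (dl_sorted P).map _ (fun a b h => Nat.sub_le_sub_right h 1)
  have hdlQ : dl Q = ((dl P).map (· - 1)).filter (fun x => x ≠ 0) := by
    apply List.Perm.eq_of_pairwise' (dl_sorted Q) (hMs.filter _)
    rw [← Multiset.coe_eq_coe]
    push_cast [dl_coe]
    rw [hQ, shrink', ← dl_coe P]
    simp [Multiset.map_coe, Multiset.filter_coe]
  rw [nthPart_eq, hdlQ, getD_filter_sorted _ hMs]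
  rw [nthPart_eq P]
  have := List.getD_map (l := dl P) (n := i) (d := 0) (· - 1)
  simpa using this

lemma sum_map_pred (s : Multiset ℕ) (hs : ∀ x ∈ s, 1 ≤ x) :
    (s.map (· - 1)).sum = s.sum - Multiset.card s := by
  induction s using Multiset.induction_on with
  | empty => simp
  | cons a s ih =>
    have ha : 1 ≤ a := hs a (Multiset.mem_cons_self a s)
    have hs' : ∀ x ∈ s, 1 ≤ x := fun x hx => hs x (Multiset.mem_cons_of_mem hx)
    have hcs : Multiset.card s ≤ s.sum := by
      calc Multiset.card s = (s.map (fun _ => 1)).sum := by simp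
      _ ≤ (s.map (fun x => x)).sum := Multiset.sum_map_le_sum_map _ _ hs'
      _ = s.sum := by simp
    simp only [Multiset.map_cons, Multiset.sum_cons, ih hs', Multiset.card_cons]
    omega

lemma card_le_sum (s : Multiset ℕ) (hs : ∀ x ∈ s, 1 ≤ x) : Multiset.card s ≤ s.sum := by
  calc Multiset.card s = (s.map (fun _ => 1)).sum := by simp
  _ ≤ (s.map (fun x => x)).sum := Multiset.sum_map_le_sum_map _ _ hs
  _ = s.sum := by simp

lemma sum_filter_ne_zero (s : Multiset ℕ) : (s.filter (fun x => x ≠ 0)).sum = s.sum := by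
  conv_rhs => rw [← Multiset.filter_add_not (fun x => x ≠ 0) s]
  rw [Multiset.sum_add]
  have : (s.filter (fun x => ¬ x ≠ 0)).sum = 0 := by
    apply Multiset.sum_eq_zero
    intro x hx
    have := (Multiset.mem_filter.1 hx).2
    omega
  omega

lemma card_filter_ne_zero (s : Multiset ℕ) :
    Multiset.card (s.filter (fun x => x ≠ 0)) = Multiset.card s - s.count 0 := by
  have hsplit := congrArg Multiset.card (Multiset.filter_add_not (fun x => x ≠ 0) s)
  rw [Multiset.card_add] at hsplit
  have h2 : s.filter (fun x => ¬ x ≠ 0) = s.filter (· = 0) := by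
    apply Multiset.filter_congr; intro x _; simp
  rw [h2, Multiset.filter_eq', Multiset.card_replicate] at hsplit
  omega

lemma count_zero_map_pred (s : Multiset ℕ) (hs : ∀ x ∈ s, 1 ≤ x) :
    (s.map (· - 1)).count 0 = s.count 1 := by
  rw [Multiset.count_map]
  have : s.filter (fun a => (0 : ℕ) = a - 1) = s.filter (· = 1) := by
    apply Multiset.filter_congr; intro x hx; have := hs x hx; constructor <;> omega
  rw [this, Multiset.filter_eq', Multiset.card_replicate]

lemma count_map_pred (s : Multiset ℕ) (p : ℕ) (hp : 1 ≤ p) :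
    (s.map (· - 1)).count p = s.count (p + 1) := by
  rw [Multiset.count_map]
  have : s.filter (fun a => p = a - 1) = s.filter (· = p + 1) := by
    apply Multiset.filter_congr; intro x hx; constructor <;> omega
  rw [this, Multiset.filter_eq', Multiset.card_replicate]

lemma count_map_succ (s : Multiset ℕ) (q : ℕ) (hq : 1 ≤ q) :
    (s.map (· + 1)).count q = s.count (q - 1) := by
  have := Multiset.count_map_eq_count' (· + 1) s (add_left_injective 1) (q - 1)
  simpa [Nat.sub_add_cancel hq] using this

lemma count_zero_map_succ (s : Multiset ℕ) : (s.map (· + 1)).count 0 = 0 := by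
  rw [Multiset.count_eq_zero]
  intro h
  rcases Multiset.mem_map.1 h with ⟨a, _, ha⟩
  omega

lemma count_shrink' (s : Multiset ℕ) (p : ℕ) (hp : 1 ≤ p) :
    (shrink' s).count p = s.count (p + 1) := by
  rw [shrink', Multiset.count_filter_of_pos (by omega), count_map_pred s p hp]

lemma count_shrink'_zero (s : Multiset ℕ) : (shrink' s).count 0 = 0 := by
  rw [shrink', Multiset.count_filter_of_neg (by simp)]

lemma grow_shrink (s : Multiset ℕ) (hs : ∀ x ∈ s, 1 ≤ x) :
    (shrink' s).map (· + 1) + Multiset.replicate (s.count 1) 1 = s := by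
  ext q
  rw [Multiset.count_add, Multiset.count_replicate]
  rcases Nat.eq_zero_or_pos q with rfl | hq
  · rw [count_zero_map_succ]
    have : s.count 0 = 0 := by
      rw [Multiset.count_eq_zero]; intro h; have := hs 0 h; omega
    simp [this]
  · rw [count_map_succ _ _ hq]
    rcases eq_or_ne q 1 with rfl | hq1
    · simp [count_shrink'_zero]
    · have hq2 : 1 ≤ q - 1 := by omega
      rw [count_shrink' _ _ hq2, if_neg (Ne.symm hq1)]
      have : q - 1 + 1 = q := by omega
      rw [this, Nat.add_zero]

lemma card_shrink' (s : Multiset ℕ) (hs : ∀ x ∈ s, 1 ≤ x) :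
    Multiset.card (shrink' s) = Multiset.card s - s.count 1 := by
  have h1 : Multiset.card (shrink' s)
      = Multiset.card (s.map (· - 1)) - (s.map (· - 1)).count 0 := by
    rw [shrink', card_filter_ne_zero]
  rw [h1, count_zero_map_pred s hs, Multiset.card_map]

lemma shrink'_grow (t : Multiset ℕ) (ht : ∀ x ∈ t, 1 ≤ x) (c : ℕ) :
    shrink' (t.map (· + 1) + Multiset.replicate c 1) = t := by
  rw [shrink', Multiset.map_add, Multiset.map_map, Multiset.map_replicate]
  have h1 : t.map ((· - 1) ∘ (· + 1)) = t := by
    rw [show ((· - 1) ∘ (· + 1) : ℕ → ℕ) = id by funext x; simp, Multiset.map_id]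
  rw [h1, Multiset.filter_add, Multiset.filter_eq_self.2 (fun a ha => by have := ht a ha; omega),
    Multiset.filter_eq_nil.2 (fun a ha => by rw [Multiset.eq_of_mem_replicate ha]; simp), add_zero]

lemma shrink'_sum (s : Multiset ℕ) (hs : ∀ x ∈ s, 1 ≤ x) :
    (shrink' s).sum = s.sum - Multiset.card s := by
  rw [shrink', sum_filter_ne_zero, sum_map_pred s hs]

lemma sum_map_succ (s : Multiset ℕ) : (s.map (· + 1)).sum = s.sum + Multiset.card s := by
  induction s using Multiset.induction_on with
  | empty => simp
  | cons a s ih => simp [ih]; omega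

/-! ### The alternating sum type is preserved by removing one from each part -/

lemma ast_shrink {n' k : ℕ} (hk : k % 3 = 0) (P : (n' + k).Partition)
    (hcard : Multiset.card P.parts = k) {Q : n'.Partition} (hQ : Q.parts = shrink' P.parts)
    {j : ℕ} (hj : j = 1 ∨ j = 2) : altSumType 3 P j = altSumType 3 Q j := by
  have hcardQ : Multiset.card Q.parts ≤ n' := by
    have := card_le_sum Q.parts (fun x hx => Q.parts_pos hx)
    rwa [Q.parts_sum] at this
  have hterm : ∀ i : ℕ, nthPart P (i * 3 + (j - 1)) - nthPart P (i * 3 + j)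
      = nthPart Q (i * 3 + (j - 1)) - nthPart Q (i * 3 + j) := by
    intro i
    set a := i * 3 + (j - 1) with ha
    set b := i * 3 + j with hb
    rw [nth_shrink P Q hQ, nth_shrink P Q hQ]
    rcases Nat.eq_zero_or_pos (nthPart P b) with hy | hy
    · have hbk : k ≤ b := by
        by_contra hlt
        have := nthPart_pos P (i := b) (by rw [hcard]; omega)
        omega
      have hbk' : b ≠ k := by
        intro h
        have : b % 3 = j % 3 := by omega
        omega
      have hax : nthPart P a = 0 := by
        apply nthPart_eq_zero
        rw [hcard]; omega
      rw [hax, hy]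
    · omega
  rw [altSumType, altSumType]
  rw [Finset.sum_congr rfl (fun i _ => hterm i)]
  symm
  apply Finset.sum_subset
  · exact Finset.range_subset_range.2 (by omega)
  · intro i _ hi
    rw [Finset.mem_range, not_lt] at hi
    have h1 : nthPart Q (i * 3 + (j - 1)) = 0 := by
      apply nthPart_eq_zero; omega
    have h2 : nthPart Q (i * 3 + j) = 0 := by
      apply nthPart_eq_zero; omega
    rw [h1, h2]
    rfl

/-! ### Counting lemmas -/

def Cond (M s1 s2 : ℕ) {n : ℕ} (P : n.Partition) : Prop :=
  Multiset.card P.parts = M ∧ (∀ p, P.parts.count p ≤ 2) ∧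
    altSumType 3 P 1 = s1 ∧ altSumType 3 P 2 = s2

open Classical in
lemma aN_eq (M s1 s2 n : ℕ) :
    aN M s1 s2 n = (Finset.univ.filter (Cond M s1 s2 (n := n))).card := by
  rw [aN, Nat.card_eq_fintype_card, Fintype.card_subtype]
  congr 1
  apply Finset.filter_congr
  intro x _
  simp [Cond]

lemma all_one_of_sum_eq_card (s : Multiset ℕ) (hs : ∀ x ∈ s, 1 ≤ x)
    (h : s.sum = Multiset.card s) : ∀ x ∈ s, x = 1 := by
  have hm := sum_map_pred s hs
  rw [h, Nat.sub_self] at hm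
  intro x hx
  have h1 := hs x hx
  have h2 : x - 1 = 0 := by
    by_contra hne
    have hmem : x - 1 ∈ s.map (· - 1) := Multiset.mem_map_of_mem _ hx
    have := Multiset.sum_eq_zero_iff.1 hm _ hmem
    omega
  omega

lemma factA {N s1 s2 n : ℕ} (hN : 1 ≤ N) (hn : n ≤ 3 * N) : aN (3 * N) s1 s2 n = 0 := by
  rw [aN]
  rw [Nat.card_eq_zero]
  left
  constructor
  rintro ⟨P, h1, h2, -, -⟩
  have hpos : ∀ x ∈ P.parts, 1 ≤ x := fun x hx => P.parts_pos hx
  have hle := card_le_sum P.parts hpos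
  rw [P.parts_sum, h1] at hle
  have hsum : P.parts.sum = Multiset.card P.parts := by rw [P.parts_sum, h1]; omega
  have hone : ∀ x ∈ P.parts, x = 1 := all_one_of_sum_eq_card _ hpos hsum
  have hc : P.parts.count 1 = Multiset.card P.parts :=
    Multiset.count_eq_card.2 (fun x hx => (hone x hx).symm)
  have := h2 1
  rw [hc, h1] at this
  omega

def shrinkPart {n' k : ℕ} (P : (n' + k).Partition) (hcard : Multiset.card P.parts = k) :
    n'.Partition where
  parts := shrink' P.parts
  parts_pos := fun {x} hx => by
    have := (Multiset.mem_filter.1 hx).2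
    simpa using Nat.pos_of_ne_zero (by simpa using this)
  parts_sum := by
    have hpos : ∀ x ∈ P.parts, 1 ≤ x := fun x hx => P.parts_pos hx
    rw [shrink'_sum P.parts hpos, P.parts_sum, hcard]
    omega

@[simp] lemma shrinkPart_parts {n' k : ℕ} (P : (n' + k).Partition)
    (hcard : Multiset.card P.parts = k) : (shrinkPart P hcard).parts = shrink' P.parts := rfl

def growPart {n' k : ℕ} (Q : n'.Partition) (c : ℕ) (hc : Multiset.card Q.parts + c = k) :
    (n' + k).Partition where
  parts := Q.parts.map (· + 1) + Multiset.replicate c 1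
  parts_pos := fun {x} hx => by
    rcases Multiset.mem_add.1 hx with hx | hx
    · rcases Multiset.mem_map.1 hx with ⟨a, _, rfl⟩; omega
    · rw [Multiset.eq_of_mem_replicate hx]; omega
  parts_sum := by
    rw [Multiset.sum_add, sum_map_succ, Q.parts_sum, Multiset.sum_replicate, smul_eq_mul,
      mul_one]
    omega

@[simp] lemma growPart_parts {n' k : ℕ} (Q : n'.Partition) (c : ℕ)
    (hc : Multiset.card Q.parts + c = k) :
    (growPart Q c hc).parts = Q.parts.map (· + 1) + Multiset.replicate c 1 := rfl

open Classical in
lemma factB (N s1 s2 n' : ℕ) (hN : 1 ≤ N) :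
    aN (3 * N) s1 s2 (n' + 3 * N)
      = aN (3 * N - 2) s1 s2 n' + aN (3 * N - 1) s1 s2 n' + aN (3 * N) s1 s2 n' := by
  rw [aN_eq, aN_eq, aN_eq, aN_eq]
  have hN3 : 3 ≤ 3 * N := by omega
  set t1 := Finset.univ.filter (Cond (3 * N - 2) s1 s2 (n := n')) with ht1
  set t2 := Finset.univ.filter (Cond (3 * N - 1) s1 s2 (n := n')) with ht2
  set t3 := Finset.univ.filter (Cond (3 * N) s1 s2 (n := n')) with ht3
  set t := Finset.univ.filter (fun Q : n'.Partition =>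
      Cond (3 * N - 2) s1 s2 Q ∨ Cond (3 * N - 1) s1 s2 Q ∨ Cond (3 * N) s1 s2 Q) with ht
  have hd23 : Disjoint t2 t3 := by
    rw [Finset.disjoint_left]
    intro Q h2 h3
    rw [ht2, Finset.mem_filter] at h2
    rw [ht3, Finset.mem_filter] at h3
    have := h2.2.1; have := h3.2.1
    omega
  have hd123 : Disjoint t1 (t2 ∪ t3) := by
    rw [Finset.disjoint_left]
    intro Q h1 h23
    rw [ht1, Finset.mem_filter] at h1
    rcases Finset.mem_union.1 h23 with h | h
    · rw [ht2, Finset.mem_filter] at h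
      have := h1.2.1; have := h.2.1; omega
    · rw [ht3, Finset.mem_filter] at h
      have := h1.2.1; have := h.2.1; omega
  have hunion : t = t1 ∪ (t2 ∪ t3) := by
    ext Q
    simp only [ht, ht1, ht2, ht3, Finset.mem_filter, Finset.mem_union, Finset.mem_univ,
      true_and, or_assoc]
  have hsplit : t.card = t1.card + t2.card + t3.card := by
    rw [hunion, Finset.card_union_of_disjoint hd123, Finset.card_union_of_disjoint hd23]
    omega
  rw [← hsplit]
  apply Finset.card_bij (i := fun (P : (n' + 3 * N).Partition) hP =>
    shrinkPart P (((Finset.mem_filter.1 hP).2).1))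
  · intro P hP
    have hP' := (Finset.mem_filter.1 hP).2
    have hpos : ∀ x ∈ P.parts, 1 ≤ x := fun x hx => P.parts_pos hx
    have hcount1 := hP'.2.1 1
    have hcardQ : Multiset.card (shrink' P.parts) = 3 * N - P.parts.count 1 :=
      by rw [card_shrink' P.parts hpos, hP'.1]
    have hcounts : ∀ p, (shrink' P.parts).count p ≤ 2 := by
      intro p
      rcases Nat.eq_zero_or_pos p with rfl | hp
      · rw [count_shrink'_zero]; omega
      · rw [count_shrink' _ _ hp]; exact hP'.2.1 (p + 1)
    have hast1 : altSumType 3 (shrinkPart P hP'.1) 1 = s1 := by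
      rw [← ast_shrink (by omega) P hP'.1 (shrinkPart_parts P hP'.1) (Or.inl rfl)]
      exact hP'.2.2.1
    have hast2 : altSumType 3 (shrinkPart P hP'.1) 2 = s2 := by
      rw [← ast_shrink (by omega) P hP'.1 (shrinkPart_parts P hP'.1) (Or.inr rfl)]
      exact hP'.2.2.2
    rw [ht, Finset.mem_filter]
    refine ⟨Finset.mem_univ _, ?_⟩
    have hc3 : P.parts.count 1 = 2 ∨ P.parts.count 1 = 1 ∨ P.parts.count 1 = 0 := by omega
    rcases hc3 with hc | hc | hc
    · exact Or.inl ⟨by rw [shrinkPart_parts, hcardQ]; omega, hcounts, hast1, hast2⟩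
    · exact Or.inr (Or.inl ⟨by rw [shrinkPart_parts, hcardQ]; omega, hcounts, hast1, hast2⟩)
    · exact Or.inr (Or.inr ⟨by rw [shrinkPart_parts, hcardQ]; omega, hcounts, hast1, hast2⟩)
  · intro P1 hP1 P2 hP2 heq
    have h1 := (Finset.mem_filter.1 hP1).2
    have h2 := (Finset.mem_filter.1 hP2).2
    have hpos1 : ∀ x ∈ P1.parts, 1 ≤ x := fun x hx => P1.parts_pos hx
    have hpos2 : ∀ x ∈ P2.parts, 1 ≤ x := fun x hx => P2.parts_pos hx
    have hparts : shrink' P1.parts = shrink' P2.parts := congrArg Nat.Partition.parts heq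
    have hcount : P1.parts.count 1 = P2.parts.count 1 := by
      have e1 := card_shrink' P1.parts hpos1
      have e2 := card_shrink' P2.parts hpos2
      rw [hparts] at e1
      have c1 := h1.2.1 1
      have c2 := h2.2.1 1
      have := h1.1; have := h2.1
      omega
    have : P1.parts = P2.parts := by
      rw [← grow_shrink P1.parts hpos1, ← grow_shrink P2.parts hpos2, hparts, hcount]
    exact Nat.Partition.ext this
  · intro Q hQ
    rw [ht, Finset.mem_filter] at hQ
    have hQ' := hQ.2
    have hcardle : Multiset.card Q.parts ≤ 3 * N ∧ 3 * N - 2 ≤ Multiset.card Q.parts := by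
      rcases hQ' with h | h | h
      · rcases h with ⟨h, -⟩; omega
      · rcases h with ⟨h, -⟩; omega
      · rcases h with ⟨h, -⟩; omega
    set c := 3 * N - Multiset.card Q.parts with hc
    have hck : Multiset.card Q.parts + c = 3 * N := by omega
    have hposQ : ∀ x ∈ Q.parts, 1 ≤ x := fun x hx => Q.parts_pos hx
    refine ⟨growPart Q c hck, ?_, ?_⟩
    · have hgparts : (growPart Q c hck).parts = Q.parts.map (· + 1) + Multiset.replicate c 1 :=
        growPart_parts Q c hck
      have hshr : shrink' (growPart Q c hck).parts = Q.parts := by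
        rw [hgparts]; exact shrink'_grow Q.parts hposQ c
      have hcardP : Multiset.card (growPart Q c hck).parts = 3 * N := by
        rw [hgparts, Multiset.card_add, Multiset.card_map, Multiset.card_replicate, hck]
      have hcounts : ∀ p, (growPart Q c hck).parts.count p ≤ 2 := by
        intro p
        have hcq : ∀ p', Q.parts.count p' ≤ 2 := by
          rcases hQ' with h | h | h
          · exact h.2.1
          · exact h.2.1
          · exact h.2.1
        rw [hgparts, Multiset.count_add, Multiset.count_replicate]
        rcases Nat.eq_zero_or_pos p with rfl | hp
        · rw [count_zero_map_succ]
          simp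
        · rw [count_map_succ _ _ hp]
          have hq0 : Q.parts.count 0 = 0 := by
            rw [Multiset.count_eq_zero]
            intro hmem
            have := hposQ 0 hmem
            omega
          have hcq' := hcq (p - 1)
          split_ifs with h
          · subst h
            rw [show (1 : ℕ) - 1 = 0 from rfl, hq0]
            omega
          · omega
      have hastP1 : altSumType 3 (growPart Q c hck) 1 = s1 := by
        rw [ast_shrink (by omega) (growPart Q c hck) hcardP hshr.symm (Or.inl rfl)]
        rcases hQ' with h | h | h
        · exact h.2.2.1
        · exact h.2.2.1
        · exact h.2.2.1
      have hastP2 : altSumType 3 (growPart Q c hck) 2 = s2 := by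
        rw [ast_shrink (by omega) (growPart Q c hck) hcardP hshr.symm (Or.inr rfl)]
        rcases hQ' with h | h | h
        · exact h.2.2.2
        · exact h.2.2.2
        · exact h.2.2.2
      exact Finset.mem_filter.2 ⟨Finset.mem_univ _, hcardP, hcounts, hastP1, hastP2⟩
    · apply Nat.Partition.ext
      rw [shrinkPart_parts, growPart_parts]
      exact shrink'_grow Q.parts hposQ c

/-! ### Power series lemmas -/

lemma coeff_Aser (M : ℕ) (hM : 1 ≤ M) (e : Fin 3 →₀ ℕ) :
    MvPowerSeries.coeff e (Aser M)
      = if 1 ≤ e 2 then (aN M (e 0) (e 1) (e 2) : ℤ) else 0 := by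
  have hA : Aser M = ((fun e => if 1 ≤ e 2 then (aN M (e 0) (e 1) (e 2) : ℤ) else 0 :
      (Fin 3 →₀ ℕ) → ℤ) : MvPowerSeries (Fin 3) ℤ) := if_neg (show ¬ M = 0 by omega)
  rw [hA]
  rfl

lemma Akey (N : ℕ) (hN : 1 ≤ N) :
    Aser (3 * N) = (Aser (3 * N - 2) + Aser (3 * N - 1) + Aser (3 * N)) * Qv ^ (3 * N) := by
  have h2 : (1 : ℕ) ≤ 3 * N - 2 := by omega
  have h1 : (1 : ℕ) ≤ 3 * N - 1 := by omega
  have h0 : (1 : ℕ) ≤ 3 * N := by omega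
  ext e
  rw [Qv, MvPowerSeries.X_pow_eq, MvPowerSeries.coeff_mul_monomial]
  rw [coeff_Aser _ h0]
  by_cases hle : Finsupp.single (2 : Fin 3) (3 * N) ≤ e
  · rw [if_pos hle]
    have he2 : 3 * N ≤ e 2 := by
      have := hle 2
      simpa using this
    have he0 : (e - Finsupp.single (2 : Fin 3) (3 * N)) 0 = e 0 := by
      rw [Finsupp.tsub_apply, Finsupp.single_apply]
      simp
    have he1 : (e - Finsupp.single (2 : Fin 3) (3 * N)) 1 = e 1 := by
      rw [Finsupp.tsub_apply, Finsupp.single_apply]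
      simp
    have he2' : (e - Finsupp.single (2 : Fin 3) (3 * N)) 2 = e 2 - 3 * N := by
      rw [Finsupp.tsub_apply, Finsupp.single_apply]
      simp
    rw [map_add, map_add, coeff_Aser _ h2, coeff_Aser _ h1, coeff_Aser _ h0,
      he0, he1, he2', mul_one]
    rcases Nat.eq_zero_or_pos (e 2 - 3 * N) with hz | hpos
    · rw [if_pos (by omega), if_neg (by omega), if_neg (by omega), if_neg (by omega)]
      have : e 2 = 3 * N := by omega
      rw [this, factA hN (le_refl _)]
      simp
    · rw [if_pos (by omega), if_pos (by omega), if_pos (by omega), if_pos (by omega)]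
      have hfb := factB N (e 0) (e 1) (e 2 - 3 * N) hN
      rw [show e 2 - 3 * N + 3 * N = e 2 by omega] at hfb
      rw [hfb]
      push_cast
      ring
  · rw [if_neg hle]
    have he2 : e 2 < 3 * N := by
      by_contra h
      exact hle (Finsupp.single_le_iff.2 (by omega))
    split_ifs with h1'
    · rw [factA hN (by omega)]
      simp
    · rfl

lemma Pser_decomp3 (m : ℕ) :
    Pser (m + 3) = Pser m + Aser (m + 1) + Aser (m + 2) + Aser (m + 3) := by
  rw [Pser, Finset.sum_range_succ, Finset.sum_range_succ, Finset.sum_range_succ, ← Pser]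

lemma Pser_decomp2 (m : ℕ) :
    Pser (m + 2) = Pser m + Aser (m + 1) + Aser (m + 2) := by
  rw [Pser, Finset.sum_range_succ, Finset.sum_range_succ, ← Pser]

theorem stmt13 (N : ℕ) (hN : 1 ≤ N) :
    Pser (3 * N) * (1 - Qv ^ (3 * N)) = Pser (3 * N - 1) - Pser (3 * N - 3) * Qv ^ (3 * N) := by
  obtain ⟨m, hm⟩ : ∃ m, 3 * N = m + 3 := ⟨3 * N - 3, by omega⟩
  have hA := Akey N hN
  rw [show 3 * N - 2 = m + 1 by omega, show 3 * N - 1 = m + 2 by omega, hm] at hA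
  rw [show 3 * N - 1 = m + 2 by omega, show 3 * N - 3 = m by omega, hm,
    Pser_decomp3, Pser_decomp2]
  linear_combination hA
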